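/- Let Λ be a lattice in a second countable locally compact abelian group G. Then there exist finitely many relatively compact fundamental domains B₁, …, B_k for Λ in G such that G = ⋃_{j=1}^k (B_j)°Λ, where (B_j)° denotes the interior. Moreover, the B_j can be chosen as translates x_j B of a single relatively compact fundamental domain B with nonempty interior. -/

import Mathlib

open scoped Pointwise

/-- `B` is a fundamental domain for the subgroup `Λ` in `G`: every `x ∈ G` can be written
uniquely as `x = b * λ` with `b ∈ B` and `λ ∈ Λ`. -/
def IsFundDomain {G : Type*} [Group G] (Λ : Subgroup G) (B : Set G) : Prop :=
  ∀ x : G, ∃! p : B × Λ, x = (p.1 : G) * (p.2 : G)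

lemma IsFundDomain.smul_set {G : Type*} [CommGroup G] {Λ : Subgroup G} {B : Set G}
    (h : IsFundDomain Λ B) (a : G) : IsFundDomain Λ (a • B) := by
  intro x
  obtain ⟨⟨⟨b, hb⟩, lam⟩, heq, huniq⟩ := h (a⁻¹ * x)
  simp only at heq
  refine ⟨⟨⟨a * b, Set.smul_mem_smul_set hb⟩, lam⟩, ?_, ?_⟩
  · simp only
    rw [mul_assoc, ← heq, mul_inv_cancel_left]
  · rintro ⟨⟨b', hb'⟩, lam'⟩ h'
    obtain ⟨c, hc, rfl⟩ := hb'
    simp only [smul_eq_mul] at h' ⊢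
    have h2 := huniq ⟨⟨c, hc⟩, lam'⟩ (by simp only; rw [h', mul_assoc, inv_mul_cancel_left])
    have hc' : c = b := congrArg (fun p => (p.1 : G)) h2
    have hl : lam' = lam := congrArg Prod.snd h2
    subst hl
    simp [hc']

/-- There exist finitely many relatively compact fundamental domains
`B₁, …, B_k` for a lattice `Λ` in a second countable LCA group `G` such that
`G = ⋃ⱼ (Bⱼ)°Λ`; moreover they can be chosen as translates `xⱼ • B` of a single relatively
compact fundamental domain `B` with nonempty interior. -/
theorem exists_finitely_many_fundamental_domains_interiors_cover
    {G : Type*} [CommGroup G] [TopologicalSpace G] [IsTopologicalGroup G]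
    [LocallyCompactSpace G] [T2Space G] [SecondCountableTopology G]
    [MeasurableSpace G] [BorelSpace G]
    (Λ : Subgroup G) [DiscreteTopology Λ] [CompactSpace (G ⧸ Λ)] :
    ∃ (B : Set G), MeasurableSet B ∧ IsFundDomain Λ B ∧ IsCompact (closure B) ∧
      (interior B).Nonempty ∧
      ∃ (k : ℕ) (x : Fin k → G),
        (∀ j, IsFundDomain Λ (x j • B) ∧ IsCompact (closure (x j • B))) ∧
        (⋃ j, interior (x j • B) * (Λ : Set G)) = Set.univ := by
    classical
  -- Step 1: open U around 1 meeting Λ only in 1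
  obtain ⟨U, hUopen, hU1, hUΛ⟩ :
      ∃ U : Set G, IsOpen U ∧ (1:G) ∈ U ∧ ∀ l : G, l ∈ Λ → l ∈ U → l = 1 := by
    have h1 : ({1} : Set Λ) ∈ nhds (1 : Λ) := by simp [nhds_discrete]
    rw [nhds_subtype] at h1
    obtain ⟨U, hU, hsub⟩ := Filter.mem_comap.mp h1
    obtain ⟨U', hU'sub, hU'open, hU'1⟩ := mem_nhds_iff.mp hU
    refine ⟨U', hU'open, hU'1, fun l hl hlU => ?_⟩
    exact congrArg Subtype.val (hsub (hU'sub hlU) : (⟨l, hl⟩ : Λ) ∈ ({1} : Set Λ))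
  -- Step 2: small open relatively compact V
  obtain ⟨K, hKcomp, hKmem⟩ := exists_compact_mem_nhds (1:G)
  obtain ⟨W₀, hW₀open, hW₀1, hW₀W₀⟩ := exists_open_nhds_one_mul_subset (hUopen.mem_nhds hU1)
  set V : Set G := (W₀ ∩ W₀⁻¹) ∩ interior K with hVdef
  have hVopen : IsOpen V := ((hW₀open.inter hW₀open.inv).inter isOpen_interior)
  have hV1 : (1:G) ∈ V :=
    ⟨⟨hW₀1, by simpa using hW₀1⟩, mem_interior_iff_mem_nhds.mpr hKmem⟩
  have hVkey : ∀ v ∈ V, ∀ v' ∈ V, v⁻¹ * v' ∈ U := by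
    intro v hv v' hv'
    exact hW₀W₀ (Set.mul_mem_mul (Set.mem_inv.mp hv.1.2) hv'.1.1)
  have hVclcomp : IsCompact (closure V) := by
    refine hKcomp.of_isClosed_subset isClosed_closure ?_
    calc closure V ⊆ closure (interior K) := closure_mono Set.inter_subset_right
    _ ⊆ closure K := closure_mono interior_subset
    _ = K := hKcomp.isClosed.closure_eq
  -- Step 3: finite cover of the quotient
  have hcovQ : (Set.univ : Set (G ⧸ Λ)) ⊆ ⋃ g : G, QuotientGroup.mk '' (g • V) := by
    rintro q -
    induction q using QuotientGroup.induction_on with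
    | H x => exact Set.mem_iUnion.mpr ⟨x, ⟨x, ⟨1, hV1, mul_one x⟩, rfl⟩⟩
  obtain ⟨t, ht⟩ := isCompact_univ.elim_finite_subcover
    (fun g : G => QuotientGroup.mk '' (g • V))
    (fun g => QuotientGroup.isOpenMap_coe _ (hVopen.smul g)) hcovQ
  set k : ℕ := t.toList.length with hkdef
  set gf : Fin k → G := t.toList.get with hgfdef
  have hsurj : ∀ a ∈ t, ∃ j : Fin k, gf j = a :=
    fun a ha => List.mem_iff_get.mp (Finset.mem_toList.mpr ha)
  set Wf : Fin k → Set G := fun i => gf i • V with hWfdef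
  have hWfopen : ∀ i, IsOpen (Wf i) := fun i => hVopen.smul _
  have hcov : ∀ x : G, ∃ (j : Fin k) (lam : Λ), x * lam ∈ Wf j := by
    intro x
    have hx := ht (Set.mem_univ (QuotientGroup.mk x : G ⧸ Λ))
    rw [Set.mem_iUnion₂] at hx
    obtain ⟨a, hat, w, hw, hmk⟩ := hx
    have hlam : x⁻¹ * w ∈ Λ := QuotientGroup.eq.mp hmk.symm
    obtain ⟨j, hj⟩ := hsurj a hat
    refine ⟨j, ⟨x⁻¹ * w, hlam⟩, ?_⟩
    show x * (x⁻¹ * w) ∈ Wf j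
    rw [mul_inv_cancel_left]
    simpa [hWfdef, hj] using hw
  have hk : 0 < k := (hcov 1).choose.pos
  set i₀ : Fin k := ⟨0, hk⟩ with hi₀def
  -- the fundamental domain
  set B : Set G := ⋃ i, (Wf i \ ⋃ j, ⋃ _ : j < i, Wf j * (Λ : Set G)) with hBdef
  have hWΛopen : ∀ j : Fin k, IsOpen (Wf j * (Λ : Set G)) := fun j => (hWfopen j).mul_right
  have memB : ∀ y : G,
      (y ∈ B ↔ ∃ i, y ∈ Wf i ∧ ∀ j, j < i → y ∉ Wf j * (Λ : Set G)) := by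
    intro y
    simp only [hBdef, Set.mem_iUnion, Set.mem_diff, not_exists]
  -- injectivity inside each translate of V
  have hinj : ∀ (i : Fin k) (b b' : G), b ∈ Wf i → b' ∈ Wf i →
      ∀ lam : Λ, b * lam = b' → (lam : G) = 1 := by
    rintro i b b' ⟨v, hv, rfl⟩ ⟨v', hv', rfl⟩ lam heq
    simp only [smul_eq_mul] at heq
    have h1 : v * lam = v' := by
      have := heq
      rwa [mul_assoc, mul_left_cancel_iff] at this
    have h2 : (lam : G) = v⁻¹ * v' := by rw [← h1, inv_mul_cancel_left]
    exact hUΛ lam lam.2 (h2 ▸ hVkey v hv v' hv')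
  -- uniqueness of representatives
  have huniq : ∀ (b b' : G), b ∈ B → b' ∈ B → ∀ lam : Λ, b * lam = b' →
      b = b' ∧ (lam : G) = 1 := by
    intro b b' hb hb' lam heq
    obtain ⟨i, hbi, hbmin⟩ := (memB b).mp hb
    obtain ⟨i', hbi', hbmin'⟩ := (memB b').mp hb'
    have hii : i = i' := by
      rcases lt_trichotomy i i' with h | h | h
      · exfalso
        have : b * (lam : G) ∈ Wf i * (Λ : Set G) := Set.mul_mem_mul hbi lam.2
        rw [heq] at this
        exact hbmin' i h this
      · exact h
      · exfalso
        have : b' * ((lam : G))⁻¹ ∈ Wf i' * (Λ : Set G) :=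
          Set.mul_mem_mul hbi' (Λ.inv_mem lam.2)
        rw [← heq, mul_inv_cancel_right] at this
        exact hbmin i' h this
    subst hii
    have h1 : (lam : G) = 1 := hinj i b b' hbi hbi' lam heq
    exact ⟨by rw [← heq, h1, mul_one], h1⟩
  -- B is a fundamental domain
  have hfund : IsFundDomain Λ B := by
    intro x
    have Hex : ∃ n : ℕ, ∃ hn : n < k, ∃ lam : Λ, x * lam ∈ Wf ⟨n, hn⟩ := by
      obtain ⟨j, lam, h⟩ := hcov x
      exact ⟨j.1, j.2, lam, by simpa using h⟩
    obtain ⟨hn, lam, hmem⟩ := Nat.find_spec Hex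
    set i : Fin k := ⟨Nat.find Hex, hn⟩ with hidef
    have hnotin : ∀ j, j < i → (x * lam : G) ∉ Wf j * (Λ : Set G) := by
      intro j hj hcontra
      obtain ⟨w, hw, m, hm, heqw⟩ := hcontra
      refine Nat.find_min Hex (show j.1 < Nat.find Hex from hj) ⟨j.2, lam * ⟨m, hm⟩⁻¹, ?_⟩
      show x * ((lam : G) * m⁻¹) ∈ Wf ⟨j.1, j.2⟩
      have heqw' : w * m = x * (lam : G) := heqw
      have : x * ((lam : G) * m⁻¹) = w := by
        rw [← mul_assoc, ← heqw', mul_inv_cancel_right]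
      rw [this]
      simpa using hw
    have hbB : x * lam ∈ B := (memB _).mpr ⟨i, hmem, hnotin⟩
    refine ⟨⟨⟨x * lam, hbB⟩, lam⁻¹⟩, ?_, ?_⟩
    · show x = (x * lam) * ((lam : G))⁻¹
      rw [mul_inv_cancel_right]
    · rintro ⟨⟨b, hb⟩, mu⟩ heq
      simp only at heq
      have hkey : b * ((mu * lam : Λ) : G) = x * lam := by
        push_cast
        rw [← mul_assoc, ← heq]
      obtain ⟨hbb, hmul⟩ := huniq b (x * lam) hb hbB (mu * lam) hkey
      have hmu : mu = lam⁻¹ := by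
        have h : (mu : G) * lam = 1 := by push_cast at hmul; exact hmul
        exact Subtype.ext (by push_cast; exact eq_inv_of_mul_eq_one_left h)
      subst hmu
      refine Prod.ext (Subtype.ext hbb) rfl
  -- measurability
  have hmeas : MeasurableSet B := by
    refine MeasurableSet.iUnion fun i => ((hWfopen i).measurableSet).diff ?_
    exact (isOpen_iUnion fun j => isOpen_iUnion fun _ => hWΛopen j).measurableSet
  -- relative compactness
  have hWfcl : ∀ i, IsCompact (closure (Wf i)) := by
    intro i
    rw [show Wf i = gf i • V from rfl, closure_smul]
    exact hVclcomp.smul _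
  have hBsub : B ⊆ ⋃ i, closure (Wf i) := by
    refine Set.iUnion_mono fun i => ?_
    exact (Set.diff_subset).trans subset_closure
  have hclB : IsCompact (closure B) := by
    refine (isCompact_iUnion hWfcl).of_isClosed_subset isClosed_closure ?_
    exact closure_minimal hBsub (isClosed_iUnion_of_finite fun i => isClosed_closure)
  -- interior nonempty
  have hW0B : Wf i₀ ⊆ B := by
    intro y hy
    refine (memB y).mpr ⟨i₀, hy, fun j hj => ?_⟩
    exact absurd (Fin.lt_def.mp hj) (Nat.not_lt_zero _)
  have hW0int : Wf i₀ ⊆ interior B := interior_maximal hW0B (hWfopen i₀)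
  have hintne : (interior B).Nonempty :=
    ⟨gf i₀, hW0int ⟨1, hV1, mul_one _⟩⟩
  -- translates
  refine ⟨B, hmeas, hfund, hclB, hintne, k, fun j => gf j * (gf i₀)⁻¹, fun j => ?_, ?_⟩
  · refine ⟨hfund.smul_set _, ?_⟩
    rw [closure_smul]
    exact hclB.smul _
  · rw [Set.eq_univ_iff_forall]
    intro y
    obtain ⟨j, lam, hmem⟩ := hcov y
    rw [Set.mem_iUnion]
    refine ⟨j, ?_⟩
    have hWj : Wf j ⊆ interior ((gf j * (gf i₀)⁻¹) • B) := by
      have h1 : (gf j * (gf i₀)⁻¹) • Wf i₀ = Wf j := by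
        show (gf j * (gf i₀)⁻¹) • (gf i₀ • V) = gf j • V
        rw [smul_smul, inv_mul_cancel_right]
      calc Wf j = (gf j * (gf i₀)⁻¹) • Wf i₀ := h1.symm
      _ ⊆ (gf j * (gf i₀)⁻¹) • interior B := Set.smul_set_mono hW0int
      _ ⊆ interior ((gf j * (gf i₀)⁻¹) • B) :=
          interior_maximal (Set.smul_set_mono interior_subset) (isOpen_interior.smul _)
    have : (y * lam) * ((lam : G))⁻¹ ∈ interior ((gf j * (gf i₀)⁻¹) • B) * (Λ : Set G) :=
      Set.mul_mem_mul (hWj hmem) (Λ.inv_mem lam.2)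
    rwa [mul_inv_cancel_right] at this
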